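/- Let M ≥ 2 be a natural number, p ∈ (0,1], and define p_0(j) = (M-1)(2p^{2j} - 4p^{3j} + p^{4j}). Let (β_n) satisfy β_0 = 1 and β_n = M p^2 β_{n-1} + p_0(n) for n ≥ 1. Then for all n ≥ 0, β_n = (Mp^2)^n ( 3 - 2 M^{-n} - 4p ((M-1)/(M-p)) (1 - (p/M)^n) + ((M-1)p^2/(M-p^2)) (1 - (p^2/M)^n) ). -/

import Mathlib

theorem stmt4 (M : ℕ) (hM : 2 ≤ M) (p : ℝ) (hp : 0 < p) (hp1 : p ≤ 1)
    (β : ℕ → ℝ) (h0 : β 0 = 1)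
    (hrec : ∀ n : ℕ, 1 ≤ n →
      β n = (M:ℝ) * p^2 * β (n-1) + ((M:ℝ)-1) * (2*p^(2*n) - 4*p^(3*n) + p^(4*n))) :
    ∀ n : ℕ, β n = ((M:ℝ)*p^2)^n *
      (3 - 2 * ((M:ℝ)^n)⁻¹
        - 4*p * (((M:ℝ)-1)/((M:ℝ)-p)) * (1 - (p/(M:ℝ))^n)
        + (((M:ℝ)-1)*p^2/((M:ℝ)-p^2)) * (1 - (p^2/(M:ℝ))^n)) := by
  have hM2 : (2:ℝ) ≤ (M:ℝ) := by exact_mod_cast hM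
  have hM0 : (M:ℝ) ≠ 0 := by linarith
  have hMp : (M:ℝ) - p ≠ 0 := by nlinarith
  have hMp2 : (M:ℝ) - p^2 ≠ 0 := by nlinarith
  have hp0 : p ≠ 0 := ne_of_gt hp
  intro n
  induction n with
  | zero => simp [h0]; norm_num
  | succ n ih =>
    have h := hrec (n+1) (by omega)
    simp only [Nat.add_sub_cancel] at h
    rw [h, ih]
    rw [div_pow, div_pow, div_pow, div_pow]
    field_simp
    ring
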